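/- Let p be an odd prime and let x ∈ F_p be nonzero. Then the number of y ∈ F_p for which y² − x³ is a nonzero square in F_p equals (p−1)/2 if x is not a square in F_p, and equals (p−3)/2 if x is a square in F_p. -/

import Mathlib

open Finset

/-- Let `p` be an odd prime and `x ∈ F_p` nonzero.  The number of `y ∈ F_p`
for which `y² - x³` is a nonzero square equals `(p-1)/2` if `x` is not a
square, and `(p-3)/2` if `x` is a square. -/
theorem count_y_sq_sub_x_cubed_nonzero_square
    (p : ℕ) [Fact p.Prime] (hp : p ≠ 2)
    (x : ZMod p) (hx : x ≠ 0) :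
    (univ.filter (fun y : ZMod p =>
        y ^ 2 - x ^ 3 ≠ 0 ∧ IsSquare (y ^ 2 - x ^ 3))).card
      = if IsSquare x then (p - 3) / 2 else (p - 1) / 2 := by
  have hpp : p.Prime := Fact.out
  have hp3 : 3 ≤ p := by
    rcases hpp.two_le.lt_or_eq with h | h
    · omega
    · exact absurd h.symm hp
  have hpodd : p % 2 = 1 := (Nat.Prime.mod_two_eq_one_iff_ne_two hpp).mpr hp
  have h2 : (2 : ZMod p) ≠ 0 := by
    have : ((2 : ℕ) : ZMod p) ≠ 0 := by
      rw [Ne, ZMod.natCast_eq_zero_iff]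
      intro h
      rcases (Nat.prime_two.eq_one_or_self_of_dvd p h) with h1 | h1 <;> omega
    simpa using this
  set c : ZMod p := x ^ 3 with hc_def
  have hc : c ≠ 0 := pow_ne_zero _ hx
  -- IsSquare c ↔ IsSquare x
  have hsq : IsSquare c ↔ IsSquare x := by
    constructor
    · rintro ⟨d, hd⟩
      refine ⟨d * x⁻¹, ?_⟩
      field_simp
      linear_combination hd
    · rintro ⟨b, hb⟩
      exact ⟨b * x, by rw [hc_def, hb]; ring⟩
  set N : Finset (ZMod p) := univ.filter (fun y : ZMod p =>
      y ^ 2 - x ^ 3 ≠ 0 ∧ IsSquare (y ^ 2 - x ^ 3)) with hN_def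
  set T : Finset (ZMod p × ZMod p) := univ.filter
      (fun w : ZMod p × ZMod p => w.1 ^ 2 - w.2 ^ 2 = c ∧ w.2 ≠ 0) with hT_def
  set U : Finset (ZMod p) := univ.filter (fun u : ZMod p => u ≠ 0 ∧ u ^ 2 ≠ c) with hU_def
  -- T.card = U.card via u ↦ ((u + c/u)/2, (u - c/u)/2)
  have hTU : T.card = U.card := by
    refine Finset.card_nbij' (s := T) (t := U) (i := fun w => w.1 + w.2)
      (j := fun u => ((u + c * u⁻¹) / 2, (u - c * u⁻¹) / 2)) ?_ ?_ ?_ ?_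
    · rintro w hw
      simp only [hT_def, mem_coe, mem_filter, mem_univ, true_and] at hw
      obtain ⟨hw1, hw2⟩ := hw
      simp only [hU_def, mem_coe, mem_filter, mem_univ, true_and]
      have hu0 : w.1 + w.2 ≠ 0 := by
        intro h
        exact hc (by rw [← hw1]; linear_combination (w.1 - w.2) * h)
      refine ⟨hu0, ?_⟩
      intro h
      have h3 : 2 * w.2 * (w.1 + w.2) = 0 := by linear_combination h - hw1
      rcases mul_eq_zero.mp h3 with h4 | h4
      · rcases mul_eq_zero.mp h4 with h5 | h5
        · exact h2 h5
        · exact hw2 h5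
      · exact hu0 h4
    · rintro u hu
      simp only [hU_def, mem_coe, mem_filter, mem_univ, true_and] at hu
      obtain ⟨hu0, hu1⟩ := hu
      simp only [hT_def, mem_coe, mem_filter, mem_univ, true_and]
      constructor
      · field_simp
        ring
      · intro h
        apply hu1
        rw [div_eq_zero_iff] at h
        rcases h with h | h
        · have h3 : u = c * u⁻¹ := by linear_combination h
          have h4 := congrArg (· * u) h3
          rw [pow_two, h4]
          field_simp
        · exact absurd h h2
    · rintro w hw
      simp only [hT_def, mem_coe, mem_filter, mem_univ, true_and] at hw
      obtain ⟨hw1, hw2⟩ := hw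
      have hu0 : w.1 + w.2 ≠ 0 := by
        intro h
        exact hc (by rw [← hw1]; linear_combination (w.1 - w.2) * h)
      have hcw : c * (w.1 + w.2)⁻¹ = w.1 - w.2 := by
        rw [← hw1]
        field_simp
        ring
      ext
      · simp only
        rw [hcw]
        field_simp
        ring
      · simp only
        rw [hcw]
        field_simp
        ring
    · rintro u hu
      simp only [hU_def, mem_coe, mem_filter, mem_univ, true_and] at hu
      field_simp [hu.1]
      ring
  -- T.card = 2 * N.card
  have hTN : T.card = 2 * N.card := by
    rw [Finset.card_eq_sum_card_fiberwise (f := Prod.fst) (t := N) ?_]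
    · rw [Finset.sum_congr rfl (g := fun _ => 2) ?_, Finset.sum_const, smul_eq_mul,
        mul_comm]
      intro y hy
      simp only [hN_def, mem_filter, mem_univ, true_and] at hy
      obtain ⟨hy1, z, hz⟩ := hy
      have hz0 : z ≠ 0 := by
        intro h; apply hy1; rw [hz, h, mul_zero]
      have hzz : z ≠ -z := by
        intro h
        apply hz0
        have : 2 * z = 0 := by linear_combination h
        rcases mul_eq_zero.mp this with h' | h'
        · exact absurd h' h2
        · exact h'
      have : T.filter (fun w => w.1 = y) = {(y, z), (y, -z)} := by
        ext w
        obtain ⟨a, b⟩ := w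
        simp only [hT_def, mem_filter, mem_univ, true_and, mem_insert, mem_singleton]
        constructor
        · rintro ⟨⟨hw1, hw2⟩, hw3⟩
          have hfac : (b - z) * (b + z) = 0 := by
            have hc' : c = x ^ 3 := rfl
            linear_combination hz - hw1 + (a + y) * hw3 - hc'
          rcases mul_eq_zero.mp hfac with h' | h'
          · left
            have hb : b = z := by linear_combination h'
            rw [hw3, hb]
          · right
            have hb : b = -z := by linear_combination h'
            rw [hw3, hb]
        · rintro (h | h)
          · injection h with h1 h2'
            refine ⟨⟨?_, by rw [h2']; exact hz0⟩, h1⟩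
            rw [h1, h2']
            show y ^ 2 - z ^ 2 = x ^ 3
            linear_combination hz
          · injection h with h1 h2'
            refine ⟨⟨?_, by rw [h2']; simpa using hz0⟩, h1⟩
            rw [h1, h2']
            show y ^ 2 - (-z) ^ 2 = x ^ 3
            linear_combination hz
      rw [this]
      rw [Finset.card_insert_of_notMem (by simp [hzz]), Finset.card_singleton]
    · intro w hw
      simp only [hT_def, mem_coe, mem_filter, mem_univ, true_and] at hw
      obtain ⟨hw1, hw2⟩ := hw
      simp only [hN_def, mem_coe, mem_filter, mem_univ, true_and]
      constructor
      · intro h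
        apply hw2
        have : w.2 ^ 2 = 0 := by linear_combination h - hw1 - hc_def
        exact pow_eq_zero_iff (n := 2) (by norm_num) |>.mp this
      · exact ⟨w.2, by linear_combination hw1 + hc_def⟩
  -- compute U.card in each case
  have hcard_univ : (univ : Finset (ZMod p)).card = p := by
    simp [ZMod.card]
  by_cases hxs : IsSquare x
  · rw [if_pos hxs]
    obtain ⟨d, hd⟩ := hsq.mpr hxs
    have hd0 : d ≠ 0 := by
      intro h; apply hc; rw [hd, h, mul_zero]
    have hdd : d ≠ -d := by
      intro h
      apply hd0
      have : 2 * d = 0 := by linear_combination h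
      rcases mul_eq_zero.mp this with h' | h'
      · exact absurd h' h2
      · exact h'
    have hU : U = univ \ {0, d, -d} := by
      ext u
      simp only [hU_def, mem_filter, mem_univ, true_and, mem_sdiff, mem_insert,
        mem_singleton, not_or]
      constructor
      · rintro ⟨h0, h1⟩
        refine ⟨h0, ?_, ?_⟩
        · rintro rfl; exact h1 (by rw [hd]; ring)
        · rintro rfl; exact h1 (by rw [hd]; ring)
      · rintro ⟨h0, h1, h2'⟩
        refine ⟨h0, ?_⟩
        intro h
        have hfac : (u - d) * (u + d) = 0 := by linear_combination h + hd - hc_def + hc_def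
        rcases mul_eq_zero.mp hfac with h' | h'
        · exact h1 (by linear_combination h')
        · exact h2' (by linear_combination h')
    have hUcard : U.card = p - 3 := by
      rw [hU, Finset.card_sdiff_of_subset (by simp), hcard_univ]
      have h0d : (0 : ZMod p) ∉ ({d, -d} : Finset (ZMod p)) := by
        simp only [mem_insert, mem_singleton]
        push_neg
        exact ⟨Ne.symm hd0, fun h => hd0 (neg_eq_zero.mp h.symm)⟩
      have hdnd : d ∉ ({-d} : Finset (ZMod p)) := by
        simp only [mem_singleton]
        exact hdd
      rw [Finset.card_insert_of_notMem h0d, Finset.card_insert_of_notMem hdnd,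
        Finset.card_singleton]
    omega
  · rw [if_neg hxs]
    have hU : U = univ \ {0} := by
      ext u
      simp only [hU_def, mem_filter, mem_univ, true_and, mem_sdiff, mem_singleton]
      constructor
      · rintro ⟨h0, _⟩; exact h0
      · intro h0
        refine ⟨h0, ?_⟩
        intro h
        exact hxs (hsq.mp ⟨u, by rw [← h]; ring⟩)
    have hUcard : U.card = p - 1 := by
      rw [hU, Finset.card_sdiff_of_subset (by simp), hcard_univ, Finset.card_singleton]
    omega
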